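/- Let ρ(y) = sup_{u∈U}⟨u, By⟩ with U ⊆ ℝ^m a nonempty compact convex set containing 0 in the interior of Bᵀ(cone of directions), B ∈ ℝ^{m×n} injective. If the polar cone of Bᵀcone(U) is {0}, then ρ is coercive. Specialize: for n = m = 1, B = 1, U = [−1,1], the condition holds and ρ(y) = |y| is coercive. -/

import Mathlib

open Matrix Filter

private lemma dot_bound (m : ℕ) (u w : Fin m → ℝ) : |u ⬝ᵥ w| ≤ m * ‖u‖ * ‖w‖ := by
  calc |u ⬝ᵥ w| = |∑ i, u i * w i| := rfl
    _ ≤ ∑ i, |u i * w i| := Finset.abs_sum_le_sum_abs _ _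
    _ ≤ ∑ _i : Fin m, ‖u‖ * ‖w‖ := by
        refine Finset.sum_le_sum fun i _ => ?_
        rw [abs_mul]
        have h1 : |u i| ≤ ‖u‖ := by
          simpa [Real.norm_eq_abs] using norm_le_pi_norm u i
        have h2 : |w i| ≤ ‖w‖ := by
          simpa [Real.norm_eq_abs] using norm_le_pi_norm w i
        exact mul_le_mul h1 h2 (abs_nonneg _) (norm_nonneg _)
    _ = m * ‖u‖ * ‖w‖ := by
        simp [Finset.sum_const, Finset.card_fin]; ring

private lemma coercive_aux (m n : ℕ) (U : Set (Fin m → ℝ)) (hne : U.Nonempty)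
    (hc : IsCompact U) (B : Matrix (Fin m) (Fin n) ℝ) (ρ : (Fin n → ℝ) → ℝ)
    (hρ : ∀ y, ρ y = sSup {v : ℝ | ∃ u ∈ U, v = u ⬝ᵥ B.mulVec y})
    (hpolar : {x : Fin n → ℝ | ∀ k ∈ (fun u => B.transpose.mulVec u) ''
        {x : Fin m → ℝ | ∃ c : ℝ, 0 ≤ c ∧ ∃ u ∈ U, x = c • u}, x ⬝ᵥ k ≤ 0} = {0}) :
    Tendsto ρ (cocompact _) atTop := by
  rcases Nat.eq_zero_or_pos n with hn | hn
  · subst hn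
    haveI : CompactSpace (Fin 0 → ℝ) := by
      haveI : Finite (Fin 0 → ℝ) := by infer_instance
      infer_instance
    rw [cocompact_eq_bot]
    exact tendsto_bot
  -- continuity of dot product in first variable
  have hcontd : ∀ (w : Fin m → ℝ), Continuous (fun u : Fin m → ℝ => u ⬝ᵥ w) := fun w =>
    continuous_finset_sum _ fun i _ => (continuous_apply i).mul continuous_const
  -- key: maximizer characterization
  have key : ∀ y, (∃ u ∈ U, ρ y = u ⬝ᵥ B.mulVec y) ∧
      ∀ u' ∈ U, u' ⬝ᵥ B.mulVec y ≤ ρ y := by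
    intro y
    obtain ⟨u, hu, hmx⟩ := hc.exists_isMaxOn hne ((hcontd (B.mulVec y)).continuousOn)
    have hb : ∀ v ∈ {v : ℝ | ∃ u ∈ U, v = u ⬝ᵥ B.mulVec y}, v ≤ u ⬝ᵥ B.mulVec y := by
      rintro v ⟨u', hu', rfl⟩; exact hmx hu'
    have heq : ρ y = u ⬝ᵥ B.mulVec y := by
      rw [hρ]
      exact le_antisymm (csSup_le ⟨_, ⟨u, hu, rfl⟩⟩ hb) (le_csSup ⟨_, hb⟩ ⟨u, hu, rfl⟩)
    exact ⟨⟨u, hu, heq⟩, fun u' hu' => heq ▸ hmx hu'⟩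
  -- positive homogeneity
  have homog : ∀ (c : ℝ), 0 ≤ c → ∀ y, ρ (c • y) = c * ρ y := by
    intro c hc0 y
    obtain ⟨⟨u, hu, heq⟩, hub⟩ := key y
    obtain ⟨⟨u2, hu2, heq2⟩, hub2⟩ := key (c • y)
    have hsc : ∀ u' : Fin m → ℝ, u' ⬝ᵥ B.mulVec (c • y) = c * (u' ⬝ᵥ B.mulVec y) := by
      intro u'; rw [mulVec_smul, dotProduct_smul]; simp
    apply le_antisymm
    · rw [heq2, hsc]
      exact mul_le_mul_of_nonneg_left (hub u2 hu2) hc0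
    · rw [heq, ← hsc]
      exact hub2 u hu
  -- positivity on nonzero vectors
  have pos : ∀ y : Fin n → ℝ, y ≠ 0 → 0 < ρ y := by
    intro y hy
    by_contra h
    push_neg at h
    have hy0 : y ∈ ({0} : Set (Fin n → ℝ)) := by
      rw [← hpolar]
      intro k hk
      obtain ⟨x, ⟨c, hc0, u, hu, rfl⟩, rfl⟩ := hk
      have h1 : y ⬝ᵥ B.transpose.mulVec (c • u) = c * (u ⬝ᵥ B.mulVec y) := by
        rw [mulVec_transpose, dotProduct_comm, ← dotProduct_mulVec, smul_dotProduct]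
        simp
      rw [h1]
      have h2 : u ⬝ᵥ B.mulVec y ≤ 0 := le_trans ((key y).2 u hu) h
      exact mul_nonpos_iff.mpr (Or.inl ⟨hc0, h2⟩)
    exact hy hy0
  -- Lipschitz bound for ρ
  obtain ⟨M, hM⟩ := hc.exists_bound_of_continuousOn continuousOn_id
  set T := LinearMap.toContinuousLinearMap (Matrix.mulVecLin B) with hT
  have hTapp : ∀ z, B.mulVec z = T z := fun z => rfl
  set L : ℝ := m * max M 0 * ‖T‖ with hL
  have hL0 : 0 ≤ L := by positivity
  have hlip1 : ∀ u ∈ U, ∀ y1 y2 : Fin n → ℝ,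
      u ⬝ᵥ B.mulVec y1 ≤ u ⬝ᵥ B.mulVec y2 + L * ‖y1 - y2‖ := by
    intro u hu y1 y2
    have hdiff : u ⬝ᵥ B.mulVec y1 - u ⬝ᵥ B.mulVec y2 = u ⬝ᵥ B.mulVec (y1 - y2) := by
      rw [mulVec_sub, dotProduct_sub]
    have h1 : |u ⬝ᵥ B.mulVec (y1 - y2)| ≤ m * ‖u‖ * ‖B.mulVec (y1 - y2)‖ :=
      dot_bound m u _
    have h2 : ‖B.mulVec (y1 - y2)‖ ≤ ‖T‖ * ‖y1 - y2‖ := by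
      rw [hTapp]; exact T.le_opNorm _
    have h3 : ‖u‖ ≤ max M 0 := le_trans (by simpa using hM u hu) (le_max_left _ _)
    have h4 : |u ⬝ᵥ B.mulVec (y1 - y2)| ≤ L * ‖y1 - y2‖ := by
      have hmn : (0:ℝ) ≤ (m:ℝ) := Nat.cast_nonneg m
      calc |u ⬝ᵥ B.mulVec (y1 - y2)| ≤ m * ‖u‖ * ‖B.mulVec (y1 - y2)‖ := h1
        _ ≤ m * max M 0 * (‖T‖ * ‖y1 - y2‖) := by
            apply mul_le_mul
            · exact mul_le_mul_of_nonneg_left h3 hmn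
            · exact h2
            · exact norm_nonneg _
            · positivity
        _ = L * ‖y1 - y2‖ := by rw [hL]; ring
    have := (abs_le.mp h4).2
    linarith [hdiff ▸ this]
  have hρlip : ∀ y1 y2 : Fin n → ℝ, ρ y1 ≤ ρ y2 + L * ‖y1 - y2‖ := by
    intro y1 y2
    obtain ⟨⟨u, hu, heq⟩, _⟩ := key y1
    calc ρ y1 = u ⬝ᵥ B.mulVec y1 := heq
      _ ≤ u ⬝ᵥ B.mulVec y2 + L * ‖y1 - y2‖ := hlip1 u hu y1 y2
      _ ≤ ρ y2 + L * ‖y1 - y2‖ := by linarith [(key y2).2 u hu]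
  have hcontρ : Continuous ρ := by
    refine (LipschitzWith.of_dist_le_mul (K := Real.toNNReal L) (f := ρ) ?_).continuous
    intro y1 y2
    rw [Real.dist_eq, Real.coe_toNNReal L hL0]
    have e1 := hρlip y1 y2
    have e2 := hρlip y2 y1
    rw [dist_eq_norm]
    rw [abs_le]
    constructor
    · have : ‖y2 - y1‖ = ‖y1 - y2‖ := norm_sub_rev _ _
      rw [this] at e2; linarith
    · linarith
  -- minimum on the sphere
  haveI : Nonempty (Fin n) := ⟨⟨0, hn⟩⟩
  have hsne : (Metric.sphere (0 : Fin n → ℝ) 1).Nonempty :=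
    NormedSpace.sphere_nonempty.mpr zero_le_one
  obtain ⟨y0, hy0s, hy0min⟩ :=
    (isCompact_sphere (0 : Fin n → ℝ) 1).exists_isMinOn hsne hcontρ.continuousOn
  have hy0ne : y0 ≠ 0 := by
    intro h
    rw [Metric.mem_sphere, dist_zero_right, h] at hy0s
    simp at hy0s
  have hεpos : 0 < ρ y0 := pos y0 hy0ne
  -- lower bound ρ y ≥ ε ‖y‖
  have hlower : ∀ y : Fin n → ℝ, ρ y0 * ‖y‖ ≤ ρ y := by
    intro y
    rcases eq_or_ne y 0 with rfl | hy
    · have : ρ (0 : Fin n → ℝ) = 0 := by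
        have := homog 0 le_rfl 0
        simpa using this
      simp [this]
    · set yhat : Fin n → ℝ := ‖y‖⁻¹ • y with hyhat
      have hyhats : yhat ∈ Metric.sphere (0 : Fin n → ℝ) 1 := by
        rw [Metric.mem_sphere, dist_zero_right, hyhat]
        exact norm_smul_inv_norm (𝕜 := ℝ) hy
      have hrec : ρ y = ‖y‖ * ρ yhat := by
        have : (‖y‖ : ℝ) • yhat = y := by
          rw [hyhat, smul_smul, mul_inv_cancel₀ (norm_ne_zero_iff.mpr hy), one_smul]
        conv_lhs => rw [← this]
        exact homog ‖y‖ (norm_nonneg _) yhat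
      have hmin := hy0min hyhats
      rw [hrec]
      have : ρ y0 ≤ ρ yhat := hmin
      nlinarith [norm_nonneg y]
  exact tendsto_atTop_mono hlower
    (Tendsto.const_mul_atTop hεpos tendsto_norm_cocompact_atTop)

theorem stmt_14 :
    (∀ (m n : ℕ) (U : Set (Fin m → ℝ)), U.Nonempty → IsCompact U → Convex ℝ U →
      ∀ (B : Matrix (Fin m) (Fin n) ℝ), Function.Injective B.mulVec →
      ∀ (ρ : (Fin n → ℝ) → ℝ),
        (∀ y, ρ y = sSup {v : ℝ | ∃ u ∈ U, v = u ⬝ᵥ B.mulVec y}) →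
        ({x : Fin n → ℝ | ∀ k ∈ (fun u => B.transpose.mulVec u) ''
            {x : Fin m → ℝ | ∃ c : ℝ, 0 ≤ c ∧ ∃ u ∈ U, x = c • u}, x ⬝ᵥ k ≤ 0}
          = {0}) →
        Tendsto ρ (cocompact _) atTop) ∧
    ({x : ℝ | ∀ k ∈ (fun u : ℝ => u) ''
        {x : ℝ | ∃ c : ℝ, 0 ≤ c ∧ ∃ u ∈ Set.Icc (-1 : ℝ) 1, x = c • u}, x * k ≤ 0}
      = {0}) ∧
    Tendsto (fun y : ℝ => |y|) (cocompact ℝ) atTop := by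
  refine ⟨?_, ?_, ?_⟩
  · intro m n U hne hc _hconv B _hinj ρ hρ hpolar
    exact coercive_aux m n U hne hc B ρ hρ hpolar
  · ext x
    simp only [Set.mem_setOf_eq, Set.mem_singleton_iff]
    constructor
    · intro h
      have h1 : x * 1 ≤ 0 :=
        h 1 ⟨1, ⟨1, zero_le_one, 1, by norm_num, by norm_num⟩, rfl⟩
      have h2 : x * (-1) ≤ 0 :=
        h (-1) ⟨-1, ⟨1, zero_le_one, -1, by norm_num, by norm_num⟩, rfl⟩
      nlinarith
    · rintro rfl k _
      simp
  · exact (tendsto_norm_cocompact_atTop (E := ℝ)).congr (fun y => Real.norm_eq_abs y)
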